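/- Let F be an algebraically closed field of characteristic zero and let L be an n-dimensional filiform Lie algebra over F with n ≥ 4, equipped with a basis e_1, …, e_n satisfying [e_1, e_i] = e_{i+1} for all 2 ≤ i ≤ n−1. Define the linear operator Δ on L by Δ(Σ_{k=1}^n x_k e_k) = 2 x_2 e_{n−1} + x_3 e_n. Then Δ is a local derivation on L which is not a derivation. -/

import Mathlib

/-- In an `n`-dimensional filiform Lie algebra (`n ≥ 4`) over an algebraically closed
field of characteristic zero with a basis `e₁, …, eₙ` (indexed by `Fin n`,
`e_k = b ⟨k-1, _⟩`) satisfying `⁅e₁, eᵢ⁆ = e_{i+1}` for `2 ≤ i ≤ n - 1`, the linear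
operator `Δ (Σ x_k e_k) = 2 x₂ e_{n-1} + x₃ eₙ` is a local derivation which is not a
derivation. -/
theorem filiform_local_derivation_not_derivation
    (F : Type*) [Field F] [IsAlgClosed F] [CharZero F]
    (L : Type*) [LieRing L] [LieAlgebra F L]
    (n : ℕ) (hn : 4 ≤ n)
    (hfil : ∀ k : ℕ, 1 ≤ k → k ≤ n - 1 →
      Module.finrank F ↥(LieModule.lowerCentralSeries F L L k) = n - k - 1)
    (b : Module.Basis (Fin n) F L)
    (hb : ∀ i : ℕ, ∀ h1 : 1 ≤ i, ∀ h2 : i ≤ n - 2,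
      ⁅b ⟨0, by omega⟩, b ⟨i, by omega⟩⁆ = b ⟨i + 1, by omega⟩)
    (Δ : L →ₗ[F] L)
    (hΔ : ∀ x : L,
      Δ x = (2 * b.repr x ⟨1, by omega⟩) • b ⟨n - 2, by omega⟩
          + (b.repr x ⟨2, by omega⟩) • b ⟨n - 1, by omega⟩) :
    (∀ x : L, ∃ D : LieDerivation F L L, Δ x = D x) ∧
    ¬ (∀ x y : L, Δ ⁅x, y⁆ = ⁅Δ x, y⁆ + ⁅x, Δ y⁆) := by
  classical
  haveI : Module.Finite F L := Module.Finite.of_basis b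
  -- the extended basis family
  set v : ℕ → L := fun i => if h : i < n then b ⟨i, h⟩ else 0 with hv
  have hvlt : ∀ (i : ℕ) (h : i < n), v i = b ⟨i, h⟩ := fun i h => dif_pos h
  have hvge : ∀ i : ℕ, n ≤ i → v i = 0 := fun i h => dif_neg (by omega)
  have hbv : ∀ i : ℕ, 1 ≤ i → i ≤ n - 2 → ⁅v 0, v i⁆ = v (i + 1) := by
    intro i h1 h2
    rw [hvlt 0 (by omega), hvlt i (by omega), hvlt (i + 1) (by omega)]
    exact hb i h1 h2
  -- lower central series facts
  have Csucc : ∀ (x : L) (k : ℕ) (m : L), m ∈ LieModule.lowerCentralSeries F L L k →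
      ⁅x, m⁆ ∈ LieModule.lowerCentralSeries F L L (k + 1) := by
    intro x k m hm
    rw [LieModule.lowerCentralSeries_succ]
    exact LieSubmodule.lie_mem_lie (LieSubmodule.mem_top x) hm
  have Cle : ∀ j k : ℕ, j ≤ k →
      LieModule.lowerCentralSeries F L L k ≤ LieModule.lowerCentralSeries F L L j :=
    fun j k h => LieModule.antitone_lowerCentralSeries F L L h
  have vmem : ∀ k : ℕ, v (k + 1) ∈ LieModule.lowerCentralSeries F L L k := by
    intro k
    induction k with
    | zero => exact LieSubmodule.mem_top _
    | succ k ih =>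
      by_cases h : k + 2 ≤ n - 1
      · rw [← hbv (k + 1) (by omega) (by omega)]
        exact Csucc _ _ _ ih
      · rw [hvge (k + 2) (by omega)]
        exact (LieModule.lowerCentralSeries F L L (k + 1)).zero_mem
  have Cbot : ∀ x : L, x ∈ LieModule.lowerCentralSeries F L L (n - 1) → x = 0 := by
    intro x hx
    have h0 : Module.finrank F ↥(LieModule.lowerCentralSeries F L L (n - 1)) = 0 := by
      rw [hfil (n - 1) (by omega) le_rfl]; omega
    have h' : (LieModule.lowerCentralSeries F L L (n - 1)).toSubmodule = ⊥ :=
      Submodule.finrank_eq_zero.mp h0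
    have : x ∈ (LieModule.lowerCentralSeries F L L (n - 1)).toSubmodule := hx
    rw [h'] at this
    simpa using this
  have central : ∀ x : L, ⁅x, v (n - 1)⁆ = 0 := by
    intro x
    have h1 : v (n - 2 + 1) ∈ LieModule.lowerCentralSeries F L L (n - 2) := vmem (n - 2)
    have e : n - 2 + 1 = n - 1 := by omega
    rw [e] at h1
    have := Csucc x (n - 2) _ h1
    rw [e] at this
    exact Cbot _ this
  have central' : ∀ x : L, ⁅v (n - 1), x⁆ = 0 := by
    intro x
    rw [← lie_skew, central, neg_zero]
  have hbr : ∀ i : ℕ, 1 ≤ i → ⁅v 0, v i⁆ = v (i + 1) := by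
    intro i h1
    by_cases h2 : i ≤ n - 2
    · exact hbv i h1 h2
    · by_cases h3 : i = n - 1
      · rw [h3, central, hvge (n - 1 + 1) (by omega)]
      · rw [hvge i (by omega), lie_zero, hvge (i + 1) (by omega)]
  have Hlem : ∀ i j : ℕ, ⁅v (i + 1), v (j + 1)⁆ ∈ LieModule.lowerCentralSeries F L L (i + j + 1) := by
    intro i
    induction i with
    | zero =>
      intro j
      have := Csucc (v 1) j _ (vmem j)
      have e : 0 + j + 1 = j + 1 := by omega
      rw [e]
      exact this
    | succ i ih =>
      intro j
      by_cases h : i + 2 < n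
      · have hv2 : v (i + 1 + 1) = ⁅v 0, v (i + 1)⁆ := (hbr (i + 1) (by omega)).symm
        rw [hv2, lie_lie]
        apply sub_mem
        · have := Csucc (v 0) (i + j + 1) _ (ih j)
          have e : i + j + 1 + 1 = i + 1 + j + 1 := by omega
          rw [e] at this
          exact this
        · rw [hbr (j + 1) (by omega)]
          have := ih (j + 1)
          have e : i + (j + 1) + 1 = i + 1 + j + 1 := by omega
          rw [e] at this
          exact this
      · rw [hvge (i + 1 + 1) (by omega), zero_lie]
        exact (LieModule.lowerCentralSeries F L L (i + 1 + j + 1)).zero_mem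
  have F3 : ∀ a c : ℕ, 1 ≤ a → 1 ≤ c → n ≤ a + c → ⁅v a, v c⁆ = 0 := by
    intro a c h1 h2 h3
    obtain ⟨i, rfl⟩ : ∃ i, a = i + 1 := ⟨a - 1, by omega⟩
    obtain ⟨j, rfl⟩ : ∃ j, c = j + 1 := ⟨c - 1, by omega⟩
    exact Cbot _ (Cle (n - 1) (i + j + 1) (by omega) (Hlem i j))
  have F4 : ∀ a c : ℕ, 1 ≤ a → 1 ≤ c →
      ⁅v a, v c⁆ ∈ LieModule.lowerCentralSeries F L L 2 := by
    intro a c h1 h2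
    by_cases hac : a = c
    · rw [hac, lie_self]
      exact (LieModule.lowerCentralSeries F L L 2).zero_mem
    · obtain ⟨i, rfl⟩ : ∃ i, a = i + 1 := ⟨a - 1, by omega⟩
      obtain ⟨j, rfl⟩ : ∃ j, c = j + 1 := ⟨c - 1, by omega⟩
      exact Cle 2 (i + j + 1) (by omega) (Hlem i j)
  -- the span fact for lcs 2
  have hC2 : (LieModule.lowerCentralSeries F L L 2).toSubmodule ≤
      Submodule.span F (Set.range (fun k : Fin (n - 3) => v (k.val + 3))) := by
    have hgli : LinearIndependent F (fun k : Fin (n - 3) => v (k.val + 3)) := by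
      have : (fun k : Fin (n - 3) => v (k.val + 3)) =
          (fun k : Fin (n - 3) => b ⟨k.val + 3, by omega⟩) := by
        funext k; exact hvlt _ (by omega)
      rw [this]
      exact b.linearIndependent.comp (fun k : Fin (n - 3) => (⟨k.val + 3, by omega⟩ : Fin n))
        (by intro x y hxy; ext; simpa [Fin.ext_iff] using hxy)
    have hle : Submodule.span F (Set.range (fun k : Fin (n - 3) => v (k.val + 3))) ≤
        (LieModule.lowerCentralSeries F L L 2).toSubmodule := by
      rw [Submodule.span_le]
      rintro _ ⟨k, rfl⟩
      have := vmem (k.val + 2)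
      exact Cle 2 (k.val + 2) (by omega) this
    have heq : Submodule.span F (Set.range (fun k : Fin (n - 3) => v (k.val + 3))) =
        (LieModule.lowerCentralSeries F L L 2).toSubmodule := by
      apply Submodule.eq_of_le_of_finrank_le hle
      rw [finrank_span_eq_card hgli]
      have h2 : Module.finrank F ↥(LieModule.lowerCentralSeries F L L 2) = n - 2 - 1 :=
        hfil 2 (by omega) (by omega)
      have : Module.finrank F ↥(LieModule.lowerCentralSeries F L L 2).toSubmodule = n - 2 - 1 := h2
      rw [this]
      simp only [Fintype.card_fin]
      omega
    rw [heq]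
  -- more bracket facts
  have brn2 : ⁅v 0, v (n - 2)⁆ = v (n - 1) := by
    simpa [show n - 2 + 1 = n - 1 by omega] using hbr (n - 2) (by omega)
  have brn2' : ⁅v (n - 2), v 0⁆ = -v (n - 1) := by
    rw [← lie_skew (v (n - 2)) (v 0), brn2]
  have zn2 : ∀ c : ℕ, 2 ≤ c → ⁅v (n - 2), v c⁆ = 0 :=
    fun c h => F3 (n - 2) c (by omega) (by omega) (by omega)
  have zn2' : ∀ a : ℕ, 2 ≤ a → ⁅v a, v (n - 2)⁆ = 0 :=
    fun a h => F3 a (n - 2) (by omega) (by omega) (by omega)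
  -- the key family of derivations
  have key : ∀ β u : F, ∃ D : LieDerivation F L L, ∀ x : L,
      D x = (b.repr x ⟨1, by omega⟩) • (β • v (n - 2) + u • v (n - 1))
          + (b.repr x ⟨2, by omega⟩) • (β • v (n - 1)) := by
    intro β u
    set W : L →ₗ[F] L := (b.coord ⟨1, by omega⟩).smulRight (β • v (n - 2) + u • v (n - 1))
        + (b.coord ⟨2, by omega⟩).smulRight (β • v (n - 1)) with hW
    have Wapp : ∀ x : L, W x = (b.repr x ⟨1, by omega⟩) • (β • v (n - 2) + u • v (n - 1))
        + (b.repr x ⟨2, by omega⟩) • (β • v (n - 1)) := by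
      intro x
      simp [hW, LinearMap.add_apply, LinearMap.smulRight_apply, Module.Basis.coord_apply]
    have W1 : W (v 1) = β • v (n - 2) + u • v (n - 1) := by
      rw [hvlt 1 (by omega), Wapp, b.repr_self_apply, b.repr_self_apply]
      rw [if_pos rfl, if_neg (by simp [Fin.ext_iff])]
      simp
    have W2 : W (v 2) = β • v (n - 1) := by
      rw [hvlt 2 (by omega), Wapp, b.repr_self_apply, b.repr_self_apply]
      rw [if_neg (by simp [Fin.ext_iff]), if_pos rfl]
      simp
    have Wv0 : ∀ m : ℕ, m ≠ 1 → m ≠ 2 → W (v m) = 0 := by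
      intro m hm1 hm2
      by_cases h : m < n
      · rw [hvlt m h, Wapp, b.repr_self_apply, b.repr_self_apply]
        rw [if_neg (by simp [Fin.ext_iff]; omega), if_neg (by simp [Fin.ext_iff]; omega)]
        simp
      · rw [hvge m (by omega), map_zero]
    have Wlz : ∀ a c : ℕ, 1 ≤ a → 1 ≤ c → W ⁅v a, v c⁆ = 0 := by
      intro a c h1 h2
      have hmem : ⁅v a, v c⁆ ∈ Submodule.span F (Set.range (fun k : Fin (n - 3) => v (k.val + 3))) :=
        hC2 (F4 a c h1 h2)
      have hker : Submodule.span F (Set.range (fun k : Fin (n - 3) => v (k.val + 3))) ≤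
          LinearMap.ker W := by
        rw [Submodule.span_le]
        rintro _ ⟨k, rfl⟩
        exact LinearMap.mem_ker.mpr (Wv0 (k.val + 3) (by omega) (by omega))
      exact LinearMap.mem_ker.mp (hker hmem)
    have hpair : ∀ a c : ℕ, a < n → c < n →
        W ⁅v a, v c⁆ = ⁅W (v a), v c⁆ + ⁅v a, W (v c)⁆ := by
      intro a c ha hc
      by_cases hac : a = c
      · subst hac
        rw [lie_self, map_zero, ← lie_skew (W (v a)) (v a)]
        exact (neg_add_cancel _).symm
      by_cases ha0 : a = 0
      · subst ha0
        rw [hbr c (by omega), Wv0 0 (by omega) (by omega), zero_lie, zero_add]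
        by_cases hc1 : c = 1
        · subst hc1
          rw [W1, W2]
          simp [lie_add, lie_smul, brn2, central]
        by_cases hc2 : c = 2
        · subst hc2
          rw [W2, Wv0 3 (by omega) (by omega)]
          simp [lie_smul, central]
        · rw [Wv0 c hc1 hc2, Wv0 (c + 1) (by omega) (by omega), lie_zero]
      by_cases hc0 : c = 0
      · subst hc0
        rw [Wv0 0 (by omega) (by omega), lie_zero, add_zero,
          (lie_skew (v a) (v 0)).symm, map_neg, hbr a (by omega)]
        by_cases ha1 : a = 1
        · subst ha1
          rw [W1, W2]
          simp [add_lie, smul_lie, brn2', central']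
        by_cases ha2 : a = 2
        · subst ha2
          rw [W2, Wv0 3 (by omega) (by omega)]
          simp [smul_lie, central']
        · rw [Wv0 a ha1 ha2, Wv0 (a + 1) (by omega) (by omega), zero_lie]
          simp
      -- now a, c ≥ 1, a ≠ c
      rw [Wlz a c (by omega) (by omega)]
      by_cases ha1 : a = 1
      · subst ha1
        rw [W1]
        by_cases hc2 : c = 2
        · subst hc2
          rw [W2]
          simp [add_lie, smul_lie, lie_smul, zn2 2 le_rfl, central, central']
        · rw [Wv0 c (by omega) hc2]
          simp [add_lie, smul_lie, zn2 c (by omega), central']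
      by_cases ha2 : a = 2
      · subst ha2
        rw [W2]
        by_cases hc1 : c = 1
        · subst hc1
          rw [W1]
          simp [smul_lie, lie_add, lie_smul, central', zn2' 2 le_rfl, central]
        · rw [Wv0 c hc1 (by omega)]
          simp [smul_lie, central']
      · rw [Wv0 a ha1 ha2, zero_lie, zero_add]
        by_cases hc1 : c = 1
        · subst hc1
          rw [W1]
          simp [lie_add, lie_smul, zn2' a (by omega), central]
        by_cases hc2 : c = 2
        · subst hc2
          rw [W2]
          simp [lie_smul, central]
        · rw [Wv0 c hc1 hc2, lie_zero]
    have hWall : ∀ x y : L, W ⁅x, y⁆ = ⁅W x, y⁆ + ⁅x, W y⁆ := by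
      letI : LieRing (Module.End F L) := LieRing.ofAssociativeRing
      set ad : L →ₗ[F] Module.End F L := (LieModule.toEnd F L L).toLinearMap with had
      have hext : LinearMap.compr₂ ad W = ad ∘ₗ W + ad.compl₂ W := by
        apply b.ext; intro i
        apply b.ext; intro j
        simp only [LinearMap.compr₂_apply, LinearMap.add_apply, LinearMap.comp_apply,
          LinearMap.compl₂_apply, had, LieHom.coe_toLinearMap, LieModule.toEnd_apply_apply]
        have hpij := hpair i.val j.val i.isLt j.isLt
        rw [hvlt _ i.isLt, hvlt _ j.isLt] at hpij
        exact hpij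
      intro x y
      have h2 := LinearMap.congr_fun (LinearMap.congr_fun hext x) y
      simpa only [LinearMap.compr₂_apply, LinearMap.add_apply, LinearMap.comp_apply,
        LinearMap.compl₂_apply, had, LieHom.coe_toLinearMap, LieModule.toEnd_apply_apply] using h2
    refine ⟨⟨W, fun x y => ?_⟩, fun x => Wapp x⟩
    show W ⁅x, y⁆ = ⁅x, W y⁆ - ⁅y, W x⁆
    rw [hWall x y, ← lie_skew (W x) y]
    abel
  constructor
  · -- local derivation
    intro x
    by_cases hx1 : b.repr x ⟨1, by omega⟩ = 0
    · obtain ⟨D, hD⟩ := key 1 0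
      refine ⟨D, ?_⟩
      rw [hΔ x, hD x, hvlt (n - 2) (by omega), hvlt (n - 1) (by omega), hx1]
      module
    · obtain ⟨D, hD⟩ := key 2 (-(b.repr x ⟨2, by omega⟩) / (b.repr x ⟨1, by omega⟩))
      refine ⟨D, ?_⟩
      rw [hΔ x, hD x, hvlt (n - 2) (by omega), hvlt (n - 1) (by omega)]
      match_scalars
      · ring
      · field_simp
        ring
  · -- not a derivation
    intro hcon
    have e01 : ⁅b ⟨0, by omega⟩, b ⟨1, by omega⟩⁆ = b ⟨2, by omega⟩ := by
      simpa using hb 1 (by omega) (by omega)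
    have ebr : ⁅b ⟨0, by omega⟩, b ⟨n - 2, by omega⟩⁆ = b ⟨n - 1, by omega⟩ := by
      simpa [show n - 2 + 1 = n - 1 by omega] using hb (n - 2) (by omega) (by omega)
    have h01 := hcon (b ⟨0, by omega⟩) (b ⟨1, by omega⟩)
    rw [e01, hΔ, hΔ, hΔ] at h01
    simp only [b.repr_self_apply, Fin.mk.injEq] at h01
    norm_num at h01
    rw [ebr] at h01
    have hb0 : b ⟨n - 1, by omega⟩ ≠ (0 : L) := b.ne_zero _
    apply hb0
    have hz : ((2 : F) - 1) • b ⟨n - 1, by omega⟩ = 0 := by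
      rw [sub_smul, one_smul, ← h01, sub_self]
    rcases smul_eq_zero.mp hz with h | h
    · norm_num at h
    · exact h
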